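/- Let γ ∈ (0,1], λ ∈ [−1,1], ω ∈ ℝ and t ≥ 0. Let σ be the 6×6 real block-diagonal matrix consisting of three 2×2 blocks [[0,1],[−1,0]] along the diagonal, let B be the 6×6 real matrix written in 2×2 blocks as [[0,0,1₂],[0,0,1₂],[1₂,1₂,0]], set 𝓛 = (γ−1)·1₆ + 2ω·σ + ((γ−1)λ/√2)·B and M_t = exp(t·𝓛). Then the symmetric matrix 1₆ − M_t·M_tᵀ is positive semidefinite. Consequently, the noise matrix 𝒦_t = Σ_β − M_t·Σ_β·M_tᵀ with Σ_β = ((η²+1)/(4η))·1₆, η > 0, is positive semidefinite, so the Gaussian prefactor exp(−(1/2)·r_tᵀ𝒦_t r_t) of the mesoscopic dynamics has modulus at most one. -/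

import Mathlib

open Matrix

/-- The 6×6 symplectic matrix: three 2×2 blocks `[[0,1],[−1,0]]` along the diagonal. -/
def sigma6 : Matrix (Fin 6) (Fin 6) ℝ :=
  Matrix.of fun i j =>
    if i.val / 2 = j.val / 2 then
      (if i.val % 2 = 0 ∧ j.val % 2 = 1 then 1
       else if i.val % 2 = 1 ∧ j.val % 2 = 0 then -1 else 0)
    else 0

/-- The 6×6 matrix written in 2×2 blocks as `[[0,0,1₂],[0,0,1₂],[1₂,1₂,0]]`. -/
def B6 : Matrix (Fin 6) (Fin 6) ℝ :=
  Matrix.of fun i j =>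
    if ((i.val / 2 < 2 ∧ j.val / 2 = 2) ∨ (i.val / 2 = 2 ∧ j.val / 2 < 2)) ∧
        i.val % 2 = j.val % 2 then 1 else 0

section Aux

attribute [local instance] Matrix.linftyOpNormedAddCommGroup Matrix.linftyOpNormedRing
  Matrix.linftyOpNormedAlgebra

set_option maxHeartbeats 2000000 in
theorem quadL_aux (γ lam ω : ℝ) (hγ : γ ∈ Set.Ioc (0 : ℝ) 1) (hlam : lam ∈ Set.Icc (-1 : ℝ) 1)
    (L : Matrix (Fin 6) (Fin 6) ℝ)
    (hL : L = (γ - 1) • (1 : Matrix (Fin 6) (Fin 6) ℝ) + (2 * ω) • sigma6 +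
      ((γ - 1) * lam / Real.sqrt 2) • B6)
    (v : Fin 6 → ℝ) : v ⬝ᵥ (L *ᵥ v) ≤ 0 := by
  subst hL
  have hs : Real.sqrt 2 * Real.sqrt 2 = 2 := Real.mul_self_sqrt (by norm_num)
  have hspos : (0:ℝ) < Real.sqrt 2 := Real.sqrt_pos.mpr (by norm_num)
  have hsinv : (Real.sqrt 2)⁻¹ = Real.sqrt 2 / 2 := by
    rw [eq_div_iff (by norm_num), inv_mul_eq_div, div_eq_iff hspos.ne', hs]
  simp only [dotProduct, mulVec, Fin.sum_univ_six, Matrix.add_apply, Matrix.smul_apply,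
    Matrix.one_apply, sigma6, B6, Matrix.of_apply, smul_eq_mul, div_eq_mul_inv, hsinv]
  simp only [show ((0:Fin 6):ℕ) = 0 from rfl, show ((1:Fin 6):ℕ) = 1 from rfl,
    show ((2:Fin 6):ℕ) = 2 from rfl, show ((3:Fin 6):ℕ) = 3 from rfl,
    show ((4:Fin 6):ℕ) = 4 from rfl, show ((5:Fin 6):ℕ) = 5 from rfl]
  norm_num [Fin.ext_iff, show ((3:Fin 6):ℕ) = 3 from rfl, show ((4:Fin 6):ℕ) = 4 from rfl,
    show ((5:Fin 6):ℕ) = 5 from rfl]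
  set s := Real.sqrt 2 with hsdef
  obtain ⟨h1l, h2l⟩ := hlam
  have h1γ : 0 ≤ 1 - γ := by linarith [hγ.2]
  have key : 0 ≤ (1+lam)*((v 0 + v 2 + s*v 4)^2+(v 1 + v 3 + s*v 5)^2)
      + (1-lam)*((v 0 + v 2 - s*v 4)^2+(v 1 + v 3 - s*v 5)^2)
      + 2*(v 0 - v 2)^2 + 2*(v 1 - v 3)^2 := by
    have a1 : (0:ℝ) ≤ 1 + lam := by linarith
    have a2 : (0:ℝ) ≤ 1 - lam := by linarith
    positivity
  have keq : 4*((v 0^2+v 1^2+v 2^2+v 3^2+v 4^2+v 5^2)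
        + lam*s*((v 0+v 2)*v 4+(v 1+v 3)*v 5))
      = (1+lam)*((v 0 + v 2 + s*v 4)^2+(v 1 + v 3 + s*v 5)^2)
      + (1-lam)*((v 0 + v 2 - s*v 4)^2+(v 1 + v 3 - s*v 5)^2)
      + 2*(v 0 - v 2)^2 + 2*(v 1 - v 3)^2 := by
    linear_combination (-2*v 4^2 - 2*v 5^2) * hs
  have hbr : 0 ≤ (v 0^2+v 1^2+v 2^2+v 3^2+v 4^2+v 5^2)
      + lam*s*((v 0+v 2)*v 4+(v 1+v 3)*v 5) := by linarith
  nlinarith [mul_nonneg h1γ hbr]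

/-- conjugation identity for quadratic forms -/
theorem dot_conj (N A : Matrix (Fin 6) (Fin 6) ℝ) (x : Fin 6 → ℝ) :
    x ⬝ᵥ ((N * A * Nᵀ) *ᵥ x) = (Nᵀ *ᵥ x) ⬝ᵥ (A *ᵥ (Nᵀ *ᵥ x)) := by
  rw [← Matrix.mulVec_mulVec, ← Matrix.mulVec_mulVec, Matrix.dotProduct_mulVec,
    ← Matrix.mulVec_transpose]

theorem dot_transpose (L : Matrix (Fin 6) (Fin 6) ℝ) (w : Fin 6 → ℝ) :
    w ⬝ᵥ (Lᵀ *ᵥ w) = w ⬝ᵥ (L *ᵥ w) := by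
  rw [Matrix.dotProduct_mulVec, Matrix.vecMul_transpose, dotProduct_comm]

theorem one_sub_psd (γ lam ω t : ℝ)
    (hγ : γ ∈ Set.Ioc (0 : ℝ) 1) (hlam : lam ∈ Set.Icc (-1 : ℝ) 1) (ht : 0 ≤ t)
    (L : Matrix (Fin 6) (Fin 6) ℝ)
    (hL : L = (γ - 1) • (1 : Matrix (Fin 6) (Fin 6) ℝ) + (2 * ω) • sigma6 +
      ((γ - 1) * lam / Real.sqrt 2) • B6) :
    ((1 : Matrix (Fin 6) (Fin 6) ℝ) -
      NormedSpace.exp (t • L) * (NormedSpace.exp (t • L))ᵀ).PosSemidef := by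
  set M := NormedSpace.exp (t • L) with hM
  refine Matrix.PosSemidef.of_dotProduct_mulVec_nonneg ?_ ?_
  · have h1 : (M * Mᵀ).IsHermitian := by
      have := Matrix.isHermitian_mul_conjTranspose_self M
      rwa [Matrix.conjTranspose_eq_transpose_of_trivial] at this
    exact Matrix.isHermitian_one.sub h1
  intro x
  simp only [star_trivial]
  set N : ℝ → Matrix (Fin 6) (Fin 6) ℝ := fun u => NormedSpace.exp (u • L) with hN
  have hTr : ∀ u : ℝ, NormedSpace.exp (u • Lᵀ) = (N u)ᵀ := by
    intro u
    rw [hN, ← Matrix.transpose_smul, Matrix.exp_transpose]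
  let φlin : Matrix (Fin 6) (Fin 6) ℝ →ₗ[ℝ] ℝ :=
    { toFun := fun P => x ⬝ᵥ (P *ᵥ x)
      map_add' := by intro P Q; simp [Matrix.add_mulVec, dotProduct_add]
      map_smul' := by intro c P; simp [Matrix.smul_mulVec, dotProduct_smul] }
  let φ : Matrix (Fin 6) (Fin 6) ℝ →L[ℝ] ℝ := φlin.toContinuousLinearMap
  set g : ℝ → ℝ := fun u => x ⬝ᵥ ((N u * (N u)ᵀ) *ᵥ x) with hg
  have hgφ : ∀ u, g u = φ (N u * NormedSpace.exp (u • Lᵀ)) := by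
    intro u; rw [hTr u]; rfl
  have hderiv : ∀ s : ℝ, HasDerivAt g
      (2 * ((N s)ᵀ *ᵥ x ⬝ᵥ (L *ᵥ ((N s)ᵀ *ᵥ x)))) s := by
    intro s
    have h1 : HasDerivAt (fun u : ℝ => NormedSpace.exp (u • L))
        (NormedSpace.exp (s • L) * L) s := hasDerivAt_exp_smul_const L s
    have h2 : HasDerivAt (fun u : ℝ => NormedSpace.exp (u • Lᵀ))
        (Lᵀ * NormedSpace.exp (s • Lᵀ)) s := hasDerivAt_exp_smul_const' Lᵀ s
    have hcomp := (φ.hasFDerivAt).comp_hasDerivAt s (h1.fun_mul h2)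
    have hEq : (⇑φ ∘ fun u : ℝ =>
        NormedSpace.exp (u • L) * NormedSpace.exp (u • Lᵀ)) = g :=
      funext fun u => (hgφ u).symm
    rw [hEq] at hcomp
    refine hcomp.congr_deriv ?_
    have hv : φ (NormedSpace.exp (s • L) * L * NormedSpace.exp (s • Lᵀ) +
        NormedSpace.exp (s • L) * (Lᵀ * NormedSpace.exp (s • Lᵀ))) =
        x ⬝ᵥ ((N s * L * (N s)ᵀ) *ᵥ x) + x ⬝ᵥ ((N s * Lᵀ * (N s)ᵀ) *ᵥ x) := by
      rw [map_add]
      rw [hTr s]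
      rw [mul_assoc (N s) Lᵀ ((N s)ᵀ)]
      rfl
    refine hv.trans ?_
    rw [dot_conj, dot_conj, dot_transpose]
    ring
  have hnonpos : ∀ s : ℝ, 2 * ((N s)ᵀ *ᵥ x ⬝ᵥ (L *ᵥ ((N s)ᵀ *ᵥ x))) ≤ 0 := by
    intro s
    have := quadL_aux γ lam ω hγ hlam L hL ((N s)ᵀ *ᵥ x)
    linarith
  have hanti : Antitone g := antitone_of_hasDerivAt_nonpos hderiv hnonpos
  have hg0 : g 0 = x ⬝ᵥ x := by
    rw [hg]
    simp [hN, zero_smul, NormedSpace.exp_zero]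
  have hgt : g t ≤ x ⬝ᵥ x := hg0 ▸ hanti ht
  have : x ⬝ᵥ (((1 : Matrix (Fin 6) (Fin 6) ℝ) - M * Mᵀ) *ᵥ x) = x ⬝ᵥ x - g t := by
    rw [Matrix.sub_mulVec, dotProduct_sub, Matrix.one_mulVec]
  rw [this]
  linarith

end Aux

/-- For `M_t = exp(t𝓛)` with `𝓛 = (γ−1)·1₆ + 2ω·σ + ((γ−1)λ/√2)·B`, `γ ∈ (0,1]`,
`|λ| ≤ 1` and `t ≥ 0`, the matrix `1₆ − M_t·M_tᵀ` is positive semidefinite; consequently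
the noise matrix `𝒦_t = Σ_β − M_t·Σ_β·M_tᵀ`, `Σ_β = ((η²+1)/(4η))·1₆` with `η > 0`, is
positive semidefinite and the Gaussian prefactor has modulus at most one. -/
theorem noise_matrix_psd (γ lam ω t η : ℝ)
    (hγ : γ ∈ Set.Ioc (0 : ℝ) 1) (hlam : lam ∈ Set.Icc (-1 : ℝ) 1)
    (ht : 0 ≤ t) (hη : 0 < η)
    (L M : Matrix (Fin 6) (Fin 6) ℝ)
    (hL : L = (γ - 1) • (1 : Matrix (Fin 6) (Fin 6) ℝ) + (2 * ω) • sigma6 +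
      ((γ - 1) * lam / Real.sqrt 2) • B6)
    (hM : M = NormedSpace.exp (t • L))
    (Sβ K : Matrix (Fin 6) (Fin 6) ℝ)
    (hSβ : Sβ = ((η ^ 2 + 1) / (4 * η)) • (1 : Matrix (Fin 6) (Fin 6) ℝ))
    (hK : K = Sβ - M * Sβ * Mᵀ) :
    ((1 : Matrix (Fin 6) (Fin 6) ℝ) - M * Mᵀ).PosSemidef ∧
    K.PosSemidef ∧
    ∀ r : Fin 6 → ℝ, |Real.exp (-(1 / 2) * (r ⬝ᵥ K *ᵥ r))| ≤ 1 := by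
  have h1 : ((1 : Matrix (Fin 6) (Fin 6) ℝ) - M * Mᵀ).PosSemidef := by
    rw [hM]; exact one_sub_psd γ lam ω t hγ hlam ht L hL
  set c : ℝ := (η ^ 2 + 1) / (4 * η) with hc
  have hcpos : 0 ≤ c := by positivity
  have hKc : K = c • ((1 : Matrix (Fin 6) (Fin 6) ℝ) - M * Mᵀ) := by
    rw [hK, hSβ, Matrix.mul_smul, Matrix.mul_one, Matrix.smul_mul, smul_sub]
  have hKpsd : K.PosSemidef := by
    rw [hKc]
    refine Matrix.PosSemidef.of_dotProduct_mulVec_nonneg ?_ ?_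
    · have := h1.1
      unfold Matrix.IsHermitian at this ⊢
      rw [Matrix.conjTranspose_smul, this, star_trivial]
    · intro y
      have hq := h1.dotProduct_mulVec_nonneg y
      simp only [star_trivial] at hq ⊢
      rw [Matrix.smul_mulVec, dotProduct_smul, smul_eq_mul]
      exact mul_nonneg hcpos hq
  refine ⟨h1, hKpsd, fun r => ?_⟩
  have hq : 0 ≤ r ⬝ᵥ K *ᵥ r := by
    have := hKpsd.dotProduct_mulVec_nonneg r
    simpa using this
  rw [abs_of_pos (Real.exp_pos _)]
  calc Real.exp (-(1 / 2) * (r ⬝ᵥ K *ᵥ r)) ≤ Real.exp 0 := by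
        apply Real.exp_le_exp.mpr; nlinarith
    _ = 1 := Real.exp_zero
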